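/- Let k be a positive integer and let Π₀, Π₁, Π ∈ Part₂(2k) with Π₀ and Π₁ perfect matchings and #(Π₀ ∨ Π₁ ∨ Π) = 1. Set r = #(Π₀ ∨ Π₁). If r > 1, then #(Π₀ ∨ Π) + #(Π₁ ∨ Π) ≤ k + 1 − ⌊r/2⌋. -/

import Mathlib

/-- Number of parts of a partition of `α`, encoded as a setoid. -/
noncomputable def numParts {α : Type*} (S : Setoid α) : ℕ := Nat.card (Quotient S)

/-- Cardinality of the part containing `x`. -/
noncomputable def partCard {α : Type*} (S : Setoid α) (x : α) : ℕ :=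
  Nat.card {y : α // S.r x y}

/-- Every part has cardinality at least 2, i.e. the partition is in `Part₂`. -/
def AllPartsTwoLe {α : Type*} (S : Setoid α) : Prop := ∀ x, 2 ≤ partCard S x

/-- A perfect matching: every part has cardinality exactly 2. -/
def IsPerfectMatching {α : Type*} (S : Setoid α) : Prop := ∀ x, partCard S x = 2


open Module Finset Submodule


section Core
variable {ι κ : Type*} [Fintype ι] [Fintype κ]

lemma core_grow [DecidableEq ι] [DecidableEq κ] (f : κ → ι → ℕ)
    (hconn : ∀ J : Finset ι, J.Nonempty → J ≠ Finset.univ →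
       ∃ C j j', j ∈ J ∧ j' ∉ J ∧ 0 < f C j ∧ 0 < f C j') :
    ∀ (n : ℕ) (J : Finset ι), J.Nonempty →
    ∀ (m : ℕ) (Cs : Fin m → κ) (js : Fin m → ι) (S : Finset κ),
    (Finset.univ \ J).card ≤ n →
    (∀ i j, 0 < f (Cs i) j → j ∈ J) →
    (∀ C ∈ S, ∀ j, 0 < f C j → j ∈ J) →
    (∀ i, Odd (f (Cs i) (js i))) →
    (∀ l i : Fin m, l < i → f (Cs l) (js i) = 0) →
    J.card ≤ 2 * m + (∑ C ∈ S, ((∑ j, f C j) - 2)) + 1 →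
    ∃ (m' : ℕ) (Cs' : Fin m' → κ) (js' : Fin m' → ι) (S' : Finset κ),
      (∀ i, Odd (f (Cs' i) (js' i))) ∧
      (∀ l i : Fin m', l < i → f (Cs' l) (js' i) = 0) ∧
      Fintype.card ι ≤ 2 * m' + (∑ C ∈ S', ((∑ j, f C j) - 2)) + 1 := by
  intro n
  induction n with
  | zero =>
    intro J hJ m Cs js S hcard _ _ hodd htri hineq
    refine ⟨m, Cs, js, S, hodd, htri, ?_⟩
    have hJu : J = Finset.univ := by
      have : (Finset.univ \ J) = ∅ := Finset.card_eq_zero.mp (Nat.le_zero.mp hcard)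
      have := Finset.sdiff_eq_empty_iff_subset.mp this
      exact Finset.eq_univ_iff_forall.mpr fun x => this (Finset.mem_univ x)
    have hcardeq : Fintype.card ι = J.card := by rw [hJu, Finset.card_univ]
    rw [hcardeq]; exact hineq
  | succ n ih =>
    intro J hJ m Cs js S hcard hsupCs hsupS hodd htri hineq
    by_cases hJu : J = Finset.univ
    · refine ⟨m, Cs, js, S, hodd, htri, ?_⟩
      have hcardeq : Fintype.card ι = J.card := by rw [hJu, Finset.card_univ]
      rw [hcardeq]; exact hineq
    obtain ⟨C, j, j', hjJ, hj'J, hfj, hfj'⟩ := hconn J hJ hJu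
    set J' : Finset ι := J ∪ Finset.univ.filter (fun i => 0 < f C i) with hJ'def
    have hJsub : J ⊆ J' := Finset.subset_union_left
    have hsupCJ' : ∀ i, 0 < f C i → i ∈ J' := by
      intro i hi; exact Finset.mem_union_right _ (Finset.mem_filter.mpr ⟨Finset.mem_univ _, hi⟩)
    have hj'J' : j' ∈ J' := hsupCJ' _ hfj'
    have hJ'ne : J'.Nonempty := hJ.mono hJsub
    have hcard' : (Finset.univ \ J').card ≤ n := by
      have hss : Finset.univ \ J' ⊂ Finset.univ \ J := by
        refine Finset.ssubset_iff_of_subset (Finset.sdiff_subset_sdiff le_rfl hJsub) |>.mpr ?_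
        exact ⟨j', Finset.mem_sdiff.mpr ⟨Finset.mem_univ _, hj'J⟩,
          fun h => (Finset.mem_sdiff.mp h).2 hj'J'⟩
      have := Finset.card_lt_card hss
      omega
    -- new vertices
    set D : Finset ι := J' \ J with hDdef
    have hDsub : ∀ x ∈ D, 0 < f C x ∧ x ∉ J := by
      intro x hx
      obtain ⟨hx1, hx2⟩ := Finset.mem_sdiff.mp hx
      rcases Finset.mem_union.mp hx1 with h | h
      · exact absurd h hx2
      · exact ⟨(Finset.mem_filter.mp h).2, hx2⟩
    have hcardJ' : J'.card = J.card + D.card := by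
      have h := Finset.card_sdiff_add_card_eq_card hJsub
      rw [← hDdef] at h
      omega
    have hDsum : ∑ x ∈ D, f C x ≤ (∑ i, f C i) - f C j := by
      have hjD : j ∉ D := fun h => (hDsub j h).2 hjJ
      have hsub : D ⊆ Finset.univ.erase j := by
        intro x hx; exact Finset.mem_erase.mpr ⟨fun h => hjD (h ▸ hx), Finset.mem_univ x⟩
      calc ∑ x ∈ D, f C x ≤ ∑ x ∈ Finset.univ.erase j, f C x := Finset.sum_le_sum_of_subset hsub
        _ = (∑ i, f C i) - f C j := by
            have := Finset.add_sum_erase _ (f C) (Finset.mem_univ j)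
            omega
    have hwC : 2 ≤ ∑ i, f C i := by
      have hjj' : j ≠ j' := fun h => hj'J (h ▸ hjJ)
      have h1 := Finset.add_sum_erase _ (f C) (Finset.mem_univ j)
      have h2 : f C j' ≤ ∑ x ∈ Finset.univ.erase j, f C x :=
        Finset.single_le_sum (fun x _ => Nat.zero_le _)
          (Finset.mem_erase.mpr ⟨fun h => hjj' h.symm, Finset.mem_univ _⟩)
      omega
    by_cases hoddout : ∃ j₀, j₀ ∉ J ∧ Odd (f C j₀)
    · -- Case A: staircase extension
      obtain ⟨j₀, hj₀J, hj₀odd⟩ := hoddout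
      have hj₀pos : 0 < f C j₀ := Nat.pos_of_ne_zero (by
        rintro h; rw [h] at hj₀odd; exact Nat.not_odd_zero hj₀odd)
      have hCS : C ∉ S := fun h => hj'J (hsupS C h j' hfj')
      refine ih J' hJ'ne (m+1) (Fin.snoc Cs C) (Fin.snoc js j₀) (insert C S) hcard' ?_ ?_ ?_ ?_ ?_
      · intro i x hx
        induction i using Fin.lastCases with
        | last => rw [Fin.snoc_last] at hx; exact hsupCJ' _ hx
        | cast i => rw [Fin.snoc_castSucc] at hx; exact hJsub (hsupCs i x hx)
      · intro Cb hCb x hx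
        rcases Finset.mem_insert.mp hCb with rfl | h
        · exact hsupCJ' x hx
        · exact hJsub (hsupS Cb h x hx)
      · intro i
        induction i using Fin.lastCases with
        | last => rw [Fin.snoc_last, Fin.snoc_last]; exact hj₀odd
        | cast i => rw [Fin.snoc_castSucc, Fin.snoc_castSucc]; exact hodd i
      · intro l i hli
        induction i using Fin.lastCases with
        | last =>
          rw [Fin.snoc_last]
          have hlne : l ≠ Fin.last m := Fin.ne_last_of_lt hli
          obtain ⟨l', rfl⟩ := Fin.exists_castSucc_eq.mpr hlne
          rw [Fin.snoc_castSucc]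
          by_contra hpos
          exact hj₀J (hsupCs l' j₀ (Nat.pos_of_ne_zero hpos))
        | cast i =>
          have hlne : l ≠ Fin.last m := Fin.ne_last_of_lt (lt_of_lt_of_le hli (Fin.le_last (Fin.castSucc i)))
          obtain ⟨l', rfl⟩ := Fin.exists_castSucc_eq.mpr hlne
          rw [Fin.snoc_castSucc, Fin.snoc_castSucc]
          exact htri l' i (by exact_mod_cast hli)
      · -- inequality
        have hDw : D.card ≤ ∑ x ∈ D, f C x := by
          rw [Finset.card_eq_sum_ones]
          exact Finset.sum_le_sum (fun x hx => (hDsub x hx).1)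
        rw [Finset.sum_insert hCS]
        have h1 : D.card ≤ (∑ i, f C i) - f C j := hDw.trans hDsum
        have h2 : 1 ≤ f C j := hfj
        calc J'.card = J.card + D.card := hcardJ'
          _ ≤ (2 * m + (∑ Cb ∈ S, ((∑ j, f Cb j) - 2)) + 1) + D.card := by omega
          _ ≤ 2 * (m+1) + (((∑ j, f C j) - 2) + ∑ Cb ∈ S, ((∑ j, f Cb j) - 2)) + 1 := by omega
    · -- Case B: all f C outside J even; add C to S
      push_neg at hoddout
      have hCS : C ∉ S := fun h => hj'J (hsupS C h j' hfj')
      have hDtwo : ∀ x ∈ D, 2 ≤ f C x := by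
        intro x hx
        obtain ⟨hpos, hxJ⟩ := hDsub x hx
        have hev : ¬ Odd (f C x) := hoddout x hxJ
        rw [Nat.not_odd_iff_even] at hev
        obtain ⟨t, ht⟩ := hev
        omega
      have hDsum2 : 2 * D.card ≤ ∑ x ∈ D, f C x := by
        rw [Finset.card_eq_sum_ones, Finset.mul_sum]
        exact Finset.sum_le_sum (fun x hx => by simpa using hDtwo x hx)
      refine ih J' hJ'ne m Cs js (insert C S) hcard' ?_ ?_ hodd htri ?_
      · intro i x hx; exact hJsub (hsupCs i x hx)
      · intro Cb hCb x hx
        rcases Finset.mem_insert.mp hCb with rfl | h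
        · exact hsupCJ' x hx
        · exact hJsub (hsupS Cb h x hx)
      · rw [Finset.sum_insert hCS]
        have h1 : 2 * D.card ≤ (∑ i, f C i) - f C j := hDsum2.trans hDsum
        have h2 : D.card ≤ ((∑ i, f C i) - 2) := by omega
        calc J'.card = J.card + D.card := hcardJ'
          _ ≤ (2 * m + (∑ Cb ∈ S, ((∑ j, f Cb j) - 2)) + 1) + D.card := by omega
          _ ≤ 2 * m + (((∑ j, f C j) - 2) + ∑ Cb ∈ S, ((∑ j, f Cb j) - 2)) + 1 := by omega
set_option linter.unusedSectionVars false

lemma staircase_linearIndependent [DecidableEq ι] (f : κ → ι → ℕ)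
    (m : ℕ) (Cs : Fin m → κ) (js : Fin m → ι)
    (hodd : ∀ i, Odd (f (Cs i) (js i)))
    (htri : ∀ l i : Fin m, l < i → f (Cs l) (js i) = 0) :
    LinearIndependent (ZMod 2) (fun i : Fin m => (fun j => (f (Cs i) j : ZMod 2) : ι → ZMod 2)) := by
  rw [Fintype.linearIndependent_iff]
  intro g hg
  by_contra hne
  push_neg at hne
  obtain ⟨i₀, hi₀⟩ := hne
  set I : Finset (Fin m) := Finset.univ.filter (fun i => g i ≠ 0) with hI
  have hIne : I.Nonempty := ⟨i₀, Finset.mem_filter.mpr ⟨Finset.mem_univ _, hi₀⟩⟩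
  set iM := I.max' hIne with hiM
  have hiMI : iM ∈ I := I.max'_mem hIne
  have hgiM : g iM ≠ 0 := (Finset.mem_filter.mp hiMI).2
  have hg' := congrFun hg (js iM)
  rw [Finset.sum_apply] at hg'
  simp only [Pi.smul_apply, Pi.zero_apply] at hg'
  have hterm : ∀ i : Fin m, g i • (f (Cs i) (js iM) : ZMod 2) = if i = iM then g iM else 0 := by
    intro i
    rcases lt_trichotomy i iM with h | h | h
    · rw [htri i iM h]
      simp [Fin.ne_of_lt h]
    · have hcast : (f (Cs i) (js iM) : ZMod 2) = 1 := by
        rw [h]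
        obtain ⟨t, ht⟩ := hodd iM
        rw [ht]; push_cast
        have h2 : (2 : ZMod 2) = 0 := by decide
        rw [h2]; ring
      rw [hcast, if_pos h, h]; simp
    · have : g i = 0 := by
        by_contra hgi
        have : i ∈ I := Finset.mem_filter.mpr ⟨Finset.mem_univ _, hgi⟩
        exact absurd (I.le_max' i this) (not_le.mpr h)
      rw [this]
      simp [Fin.ne_of_gt h]
  rw [Finset.sum_congr rfl (fun i _ => hterm i), Finset.sum_ite_eq' _ iM] at hg'
  simp at hg'
  exact hgiM hg'

lemma core_rank [DecidableEq ι] [DecidableEq κ] [Nonempty ι] (f : κ → ι → ℕ)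
    (hconn : ∀ J : Finset ι, J.Nonempty → J ≠ Finset.univ →
       ∃ C j j', j ∈ J ∧ j' ∉ J ∧ 0 < f C j ∧ 0 < f C j') :
    Fintype.card ι ≤
      2 * finrank (ZMod 2) (span (ZMod 2)
          (Set.range (fun C => (fun j => (f C j : ZMod 2) : ι → ZMod 2))))
        + (∑ C, ((∑ j, f C j) - 2)) + 1 := by
  obtain ⟨j₀⟩ := (inferInstance : Nonempty ι)
  obtain ⟨m, Cs, js, S, hodd, htri, hbound⟩ :=
    core_grow f hconn (Finset.univ \ {j₀}).card {j₀} ⟨j₀, Finset.mem_singleton_self j₀⟩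
      0 (fun i => i.elim0) (fun i => i.elim0) ∅ le_rfl
      (fun i => i.elim0) (fun C hC => absurd hC (Finset.notMem_empty C))
      (fun i => i.elim0) (fun l => l.elim0)
      (by simp)
  have hli := staircase_linearIndependent f m Cs js hodd htri
  have hrank : m ≤ finrank (ZMod 2) (span (ZMod 2)
      (Set.range (fun C => (fun j => (f C j : ZMod 2) : ι → ZMod 2)))) := by
    have h1 := finrank_span_eq_card hli
    rw [Fintype.card_fin] at h1
    have h2 : span (ZMod 2) (Set.range (fun i : Fin m =>
        (fun j => (f (Cs i) j : ZMod 2) : ι → ZMod 2))) ≤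
        span (ZMod 2) (Set.range (fun C => (fun j => (f C j : ZMod 2) : ι → ZMod 2))) := by
      apply Submodule.span_mono
      rintro x ⟨i, rfl⟩
      exact ⟨Cs i, rfl⟩
    calc m = _ := h1.symm
      _ ≤ _ := Submodule.finrank_mono h2
  have hSsum : (∑ C ∈ S, ((∑ j, f C j) - 2)) ≤ ∑ C, ((∑ j, f C j) - 2) :=
    Finset.sum_le_sum_of_subset (Finset.subset_univ S)
  omega

end Core

section Helpers
variable {α : Type*} [Fintype α]

/-- The finset of elements in the same `S`-class as the class `c`. -/
lemma partCard_eq_filter_card (S : Setoid α) [DecidableEq (Quotient S)] (x : α) :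
    partCard S x = (Finset.univ.filter (fun y => (⟦y⟧ : Quotient S) = ⟦x⟧)).card := by
  classical
  unfold partCard
  rw [Nat.card_eq_fintype_card, Fintype.card_subtype]
  congr 1
  apply Finset.filter_congr
  intro y _
  constructor
  · intro h; exact Quotient.sound (S.symm h)
  · intro h; exact S.symm (Quotient.exact h)

lemma sum_class_even (S R : Setoid α) [DecidableEq (Quotient S)] [DecidableEq (Quotient R)]
    (hle : S ≤ R) (hS2 : ∀ x, partCard S x = 2) (F : α → ZMod 2)
    (hF : ∀ x y, S x y → F x = F y) (j : Quotient R) :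
    ∑ x ∈ Finset.univ.filter (fun x => (⟦x⟧ : Quotient R) = j), F x = 0 := by
  classical
  rw [← Finset.sum_fiberwise_of_maps_to
    (g := fun x => (⟦x⟧ : Quotient S)) (fun x _ => Finset.mem_univ _) F]
  apply Finset.sum_eq_zero
  intro c _
  set t := (Finset.univ.filter (fun x => (⟦x⟧ : Quotient R) = j)).filter
      (fun x => (⟦x⟧ : Quotient S) = c) with ht
  rcases Finset.eq_empty_or_nonempty t with he | ⟨x₀, hx₀⟩
  · rw [he]; simp
  · have hx₀' := Finset.mem_filter.mp hx₀
    have hx₀R : (⟦x₀⟧ : Quotient R) = j := (Finset.mem_filter.mp hx₀'.1).2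
    have hx₀S : (⟦x₀⟧ : Quotient S) = c := hx₀'.2
    have htc : t = Finset.univ.filter (fun y => (⟦y⟧ : Quotient S) = ⟦x₀⟧) := by
      ext y
      simp only [ht, Finset.mem_filter, Finset.mem_univ, true_and]
      constructor
      · rintro ⟨-, hy⟩; rw [hy, ← hx₀S]
      · intro hy
        have hSyx : S y x₀ := Quotient.exact hy
        refine ⟨?_, by rw [hy, hx₀S]⟩
        have : R y x₀ := Setoid.le_def.mp hle hSyx
        rw [← hx₀R]
        exact Quotient.sound this
    have hconst : ∀ y ∈ t, F y = F x₀ := by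
      intro y hy
      rw [htc] at hy
      exact hF y x₀ (Quotient.exact (Finset.mem_filter.mp hy).2)
    rw [Finset.sum_congr rfl hconst, Finset.sum_const]
    have hcard : t.card = 2 := by
      rw [htc, ← partCard_eq_filter_card S x₀]; exact hS2 x₀
    rw [hcard, two_smul]
    exact CharTwo.add_self_eq_zero _

lemma top_rel_of_numParts_eq_one {S : Setoid α} [Nonempty α] (h : numParts S = 1) :
    ∀ x y, S x y := by
  intro x y
  unfold numParts at h
  have hsub := (Nat.card_eq_one_iff_unique.mp h).1
  exact Quotient.exact (Subsingleton.elim (⟦x⟧ : Quotient S) ⟦y⟧)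

lemma sup_rel_ind {S T : Setoid α} {x y : α} (h : (S ⊔ T) x y)
    {P : α → α → Prop} (hS : ∀ a b, S a b → P a b) (hT : ∀ a b, T a b → P a b)
    (hrefl : ∀ a, P a a) (hsymm : ∀ a b, P a b → P b a)
    (htrans : ∀ a b c, P a b → P b c → P a c) : P x y := by
  have h' : Relation.EqvGen (fun a b => S a b ∨ T a b) x y := by
    rw [Setoid.sup_eq_eqvGen] at h
    exact h
  clear h
  induction h' with
  | rel a b hab => rcases hab with h1 | h1
                   · exact hS a b h1
                   · exact hT a b h1
  | refl a => exact hrefl a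
  | symm a b _ ih => exact hsymm a b ih
  | trans a b c _ _ ih1 ih2 => exact htrans a b c ih1 ih2

end Helpers

/-- estimate (14): for `Π₀, Π₁, Π ∈ Part₂(2k)` with `Π₀, Π₁`
perfect matchings, `#(Π₀ ∨ Π₁ ∨ Π) = 1` and `r = #(Π₀ ∨ Π₁) > 1`, one has
`#(Π₀ ∨ Π) + #(Π₁ ∨ Π) ≤ k + 1 − ⌊r/2⌋` (stated additively in `ℕ`). -/
theorem stmt_3 (k : ℕ) (hk : 0 < k) (P₀ P₁ P : Setoid (Fin (2 * k)))
    (h₀ : IsPerfectMatching P₀) (h₁ : IsPerfectMatching P₁)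
    (hP : AllPartsTwoLe P)
    (hjoin : numParts (P₀ ⊔ P₁ ⊔ P) = 1)
    (r : ℕ) (hr : r = numParts (P₀ ⊔ P₁)) (hr1 : 1 < r) :
    numParts (P₀ ⊔ P) + numParts (P₁ ⊔ P) + r / 2 ≤ k + 1 := by
  classical
  have hαne : Nonempty (Fin (2 * k)) := ⟨⟨0, by omega⟩⟩
  set σ₀ := P₀ ⊔ P with hσ₀
  set σ₁ := P₁ ⊔ P with hσ₁
  set ρ := P₀ ⊔ P₁ with hρ
  -- Fintype instances
  letI : Fintype (Quotient σ₀) := Fintype.ofFinite _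
  letI : Fintype (Quotient σ₁) := Fintype.ofFinite _
  letI : Fintype (Quotient ρ) := Fintype.ofFinite _
  letI : Fintype (Quotient P) := Fintype.ofFinite _
  have hQρne : Nonempty (Quotient ρ) := Nonempty.map (fun x => (⟦x⟧ : Quotient ρ)) hαne
  -- top relations
  have htopPPP : ∀ x y : Fin (2 * k), (P₀ ⊔ P₁ ⊔ P) x y := top_rel_of_numParts_eq_one hjoin
  have htopσ : ∀ x y, (σ₀ ⊔ σ₁) x y := by
    have he : σ₀ ⊔ σ₁ = P₀ ⊔ P₁ ⊔ P := by
      rw [hσ₀, hσ₁, sup_sup_sup_comm, sup_idem]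
    rw [he]; exact htopPPP
  have htopρP : ∀ x y, (ρ ⊔ P) x y := htopPPP
  -- order facts
  have hP0σ₀ : P₀ ≤ σ₀ := le_sup_left
  have hP1σ₁ : P₁ ≤ σ₁ := le_sup_left
  have hPσ₀ : P ≤ σ₀ := le_sup_right
  have hPσ₁ : P ≤ σ₁ := le_sup_right
  have hP0ρ : P₀ ≤ ρ := le_sup_left
  have hP1ρ : P₁ ≤ ρ := le_sup_right
  -- the class maps
  set q0 : Quotient P → Quotient σ₀ :=
    Quotient.lift (fun x => (⟦x⟧ : Quotient σ₀))
      (fun a b hab => Quotient.sound (Setoid.le_def.mp hPσ₀ hab)) with hq0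
  set q1 : Quotient P → Quotient σ₁ :=
    Quotient.lift (fun x => (⟦x⟧ : Quotient σ₁))
      (fun a b hab => Quotient.sound (Setoid.le_def.mp hPσ₁ hab)) with hq1
  -- the linear maps
  set T : ((Quotient σ₀ → ZMod 2) × (Quotient σ₁ → ZMod 2)) →ₗ[ZMod 2] (Quotient P → ZMod 2) :=
    { toFun := fun u => fun c => u.1 (q0 c) + u.2 (q1 c)
      map_add' := by intro u v; funext c; simp [Prod.fst_add, Prod.snd_add]; ring
      map_smul' := by intro m u; funext c; simp [Prod.smul_fst, Prod.smul_snd]; ring } with hT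
  set β : (Quotient P → ZMod 2) →ₗ[ZMod 2] (Quotient ρ → ZMod 2) :=
    { toFun := fun g => fun j =>
        ∑ x ∈ Finset.univ.filter (fun x => (⟦x⟧ : Quotient ρ) = j), g (⟦x⟧ : Quotient P)
      map_add' := by intro u v; funext j; simp [Finset.sum_add_distrib]
      map_smul' := by intro m u; funext j; simp [Finset.mul_sum] } with hβ
  -- kernel of T is the one-dimensional space of constants
  have he_ker : LinearMap.ker T = Submodule.span (ZMod 2)
      {((fun _ => 1 : Quotient σ₀ → ZMod 2), (fun _ => 1 : Quotient σ₁ → ZMod 2))} := by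
    apply le_antisymm
    · intro u hu
      rw [LinearMap.mem_ker] at hu
      have hu' : ∀ x : Fin (2 * k), u.1 (⟦x⟧ : Quotient σ₀) + u.2 (⟦x⟧ : Quotient σ₁) = 0 := by
        intro x
        have := congrFun hu (⟦x⟧ : Quotient P)
        exact this
      have hEq : ∀ x : Fin (2 * k), u.1 (⟦x⟧ : Quotient σ₀) = u.2 (⟦x⟧ : Quotient σ₁) := by
        intro x
        have h := hu' x
        have : u.1 (⟦x⟧ : Quotient σ₀) + u.2 (⟦x⟧ : Quotient σ₁) + u.2 (⟦x⟧ : Quotient σ₁)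
            = u.2 (⟦x⟧ : Quotient σ₁) := by rw [h]; ring
        rwa [add_assoc, CharTwo.add_self_eq_zero, add_zero] at this
      set v : Fin (2 * k) → ZMod 2 := fun x => u.1 (⟦x⟧ : Quotient σ₀) with hv
      have hvconst : ∀ x y, v x = v y := by
        intro x y
        refine sup_rel_ind (P := fun a b => v a = v b) (htopσ x y) ?_ ?_ ?_ ?_ ?_
        · intro a b hab
          simp only [hv]
          rw [Quotient.sound hab]
        · intro a b hab
          simp only [hv]
          rw [hEq a, hEq b, Quotient.sound hab]
        · intro a; rfl
        · intro a b hab; exact hab.symm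
        · intro a b c h1 h2; exact h1.trans h2
      obtain ⟨x₀⟩ := hαne
      rw [Submodule.mem_span_singleton]
      refine ⟨v x₀, ?_⟩
      have hu1 : ∀ c : Quotient σ₀, u.1 c = v x₀ := by
        intro c
        obtain ⟨x, rfl⟩ := Quotient.exists_rep c
        exact (hvconst x x₀)
      have hu2 : ∀ c : Quotient σ₁, u.2 c = v x₀ := by
        intro c
        obtain ⟨x, rfl⟩ := Quotient.exists_rep c
        rw [← hEq x]
        exact (hvconst x x₀)
      apply Prod.ext
      · funext c; simp [hu1 c]
      · funext c; simp [hu2 c]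
    · rw [Submodule.span_le, Set.singleton_subset_iff]
      rw [SetLike.mem_coe, LinearMap.mem_ker]
      funext c
      show (1 : ZMod 2) + 1 = 0
      decide
  have hkerT : finrank (ZMod 2) (LinearMap.ker T) = 1 := by
    rw [he_ker]
    apply finrank_span_singleton
    intro hcon
    obtain ⟨x₀⟩ := hαne
    have := congrFun (congrArg Prod.fst hcon) (⟦x₀⟧ : Quotient σ₀)
    simp at this
  -- beta ∘ T = 0
  have hβT : ∀ u, β (T u) = 0 := by
    intro u
    funext j
    show ∑ x ∈ Finset.univ.filter (fun x => (⟦x⟧ : Quotient ρ) = j),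
        (u.1 (q0 (⟦x⟧ : Quotient P)) + u.2 (q1 (⟦x⟧ : Quotient P))) = 0
    have hq0x : ∀ x : Fin (2 * k), q0 (⟦x⟧ : Quotient P) = (⟦x⟧ : Quotient σ₀) := fun x => rfl
    have hq1x : ∀ x : Fin (2 * k), q1 (⟦x⟧ : Quotient P) = (⟦x⟧ : Quotient σ₁) := fun x => rfl
    calc ∑ x ∈ Finset.univ.filter (fun x => (⟦x⟧ : Quotient ρ) = j),
          (u.1 (q0 (⟦x⟧ : Quotient P)) + u.2 (q1 (⟦x⟧ : Quotient P)))
        = (∑ x ∈ Finset.univ.filter (fun x => (⟦x⟧ : Quotient ρ) = j),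
            u.1 (⟦x⟧ : Quotient σ₀))
          + ∑ x ∈ Finset.univ.filter (fun x => (⟦x⟧ : Quotient ρ) = j),
            u.2 (⟦x⟧ : Quotient σ₁) := by
          rw [← Finset.sum_add_distrib]
          apply Finset.sum_congr rfl
          intro x _
          rw [hq0x, hq1x]
      _ = 0 + 0 := by
          congr 1
          · exact sum_class_even P₀ ρ hP0ρ h₀ _
              (fun x y hxy => by rw [Quotient.sound (Setoid.le_def.mp hP0σ₀ hxy)]) j
          · exact sum_class_even P₁ ρ hP1ρ h₁ _
              (fun x y hxy => by rw [Quotient.sound (Setoid.le_def.mp hP1σ₁ hxy)]) j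
      _ = 0 := by ring
  -- the counting function
  set f : Quotient P → Quotient ρ → ℕ := fun C j =>
    (Finset.univ.filter (fun x => (⟦x⟧ : Quotient ρ) = j ∧ (⟦x⟧ : Quotient P) = C)).card
    with hf
  -- the row vectors of f lie in the range of β
  have hv_in : ∀ C : Quotient P,
      (fun j => (f C j : ZMod 2) : Quotient ρ → ZMod 2) ∈ LinearMap.range β := by
    intro C
    refine ⟨Pi.single C 1, ?_⟩
    funext j
    simp only [hβ, LinearMap.coe_mk, AddHom.coe_mk]
    have hps : ∀ c : Quotient P, (Pi.single C (1 : ZMod 2) : Quotient P → ZMod 2) c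
        = if c = C then 1 else 0 := by
      intro c; rw [Pi.single_apply]
    rw [Finset.sum_congr rfl (fun x _ => hps (⟦x⟧ : Quotient P)), Finset.sum_boole, hf]
    congr 1
    rw [Finset.filter_filter]
  -- connectivity
  have hconn : ∀ J : Finset (Quotient ρ), J.Nonempty → J ≠ Finset.univ →
      ∃ C j j', j ∈ J ∧ j' ∉ J ∧ 0 < f C j ∧ 0 < f C j' := by
    intro J hJne hJuniv
    by_contra hno
    push_neg at hno
    have hinv : ∀ x y : Fin (2 * k), (ρ ⊔ P) x y →
        (((⟦x⟧ : Quotient ρ) ∈ J) ↔ ((⟦y⟧ : Quotient ρ) ∈ J)) := by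
      intro x y hxy
      refine sup_rel_ind
        (P := fun a b => (((⟦a⟧ : Quotient ρ) ∈ J) ↔ ((⟦b⟧ : Quotient ρ) ∈ J))) hxy
        ?_ ?_ ?_ ?_ ?_
      · intro a b hab; rw [Quotient.sound hab]
      · intro a b hab
        have hPab : (⟦a⟧ : Quotient P) = (⟦b⟧ : Quotient P) := Quotient.sound hab
        have hfa : 0 < f (⟦a⟧ : Quotient P) (⟦a⟧ : Quotient ρ) := by
          rw [hf]
          apply Finset.card_pos.mpr
          exact ⟨a, Finset.mem_filter.mpr ⟨Finset.mem_univ _, rfl, rfl⟩⟩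
        have hfb : 0 < f (⟦a⟧ : Quotient P) (⟦b⟧ : Quotient ρ) := by
          rw [hf]
          apply Finset.card_pos.mpr
          exact ⟨b, Finset.mem_filter.mpr ⟨Finset.mem_univ _, rfl, hPab.symm⟩⟩
        constructor
        · intro ha
          by_contra hb
          exact absurd hfb (by simpa using
            (hno (⟦a⟧ : Quotient P) (⟦a⟧ : Quotient ρ) (⟦b⟧ : Quotient ρ) ha hb hfa))
        · intro hb
          by_contra ha
          exact absurd hfa (by simpa using
            (hno (⟦a⟧ : Quotient P) (⟦b⟧ : Quotient ρ) (⟦a⟧ : Quotient ρ) hb ha hfb))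
      · intro a; rfl
      · intro a b hab; exact hab.symm
      · intro a b c h1 h2; exact h1.trans h2
    obtain ⟨j, hjJ⟩ := hJne
    obtain ⟨j', hj'J⟩ : ∃ j', j' ∉ J := by
      by_contra hall
      push_neg at hall
      exact hJuniv (Finset.eq_univ_iff_forall.mpr hall)
    obtain ⟨x₁, rfl⟩ := Quotient.exists_rep j
    obtain ⟨y₁, rfl⟩ := Quotient.exists_rep j'
    exact hj'J ((hinv x₁ y₁ (htopρP x₁ y₁)).mp hjJ)
  -- counting facts
  have hfib : ∀ C : Quotient P, (∑ j, f C j)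
      = (Finset.univ.filter (fun x => (⟦x⟧ : Quotient P) = C)).card := by
    intro C
    rw [Finset.card_eq_sum_card_fiberwise
      (f := fun x => (⟦x⟧ : Quotient ρ)) (t := Finset.univ) (fun x _ => Finset.mem_univ _)]
    apply Finset.sum_congr rfl
    intro j _
    rw [hf, Finset.filter_filter]
    apply congrArg Finset.card
    ext x
    simp only [Finset.mem_filter, Finset.mem_univ, true_and]
    tauto
  have hw2 : ∀ C : Quotient P, 2 ≤ ∑ j, f C j := by
    intro C
    obtain ⟨x₀, rfl⟩ := Quotient.exists_rep C
    rw [hfib, ← partCard_eq_filter_card P x₀]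
    exact hP x₀
  have htot : ∑ C : Quotient P, ∑ j, f C j = 2 * k := by
    rw [Finset.sum_congr rfl (fun C _ => hfib C)]
    rw [← Finset.card_eq_sum_card_fiberwise
      (f := fun x => (⟦x⟧ : Quotient P)) (t := Finset.univ) (fun x _ => Finset.mem_univ _)]
    simp
  -- dimension bookkeeping
  have hdims : finrank (ZMod 2) ((Quotient σ₀ → ZMod 2) × (Quotient σ₁ → ZMod 2))
      = Fintype.card (Quotient σ₀) + Fintype.card (Quotient σ₁) := by
    rw [Module.finrank_prod, Module.finrank_pi, Module.finrank_pi]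
  have hrnT := LinearMap.finrank_range_add_finrank_ker T
  rw [hdims, hkerT] at hrnT
  have hrnβ := LinearMap.finrank_range_add_finrank_ker β
  rw [Module.finrank_pi] at hrnβ
  have hTker : LinearMap.range T ≤ LinearMap.ker β := by
    rintro x ⟨u, rfl⟩
    rw [LinearMap.mem_ker]
    exact hβT u
  have hrangeT_le : finrank (ZMod 2) (LinearMap.range T)
      ≤ finrank (ZMod 2) (LinearMap.ker β) := Submodule.finrank_mono hTker
  have hcore := core_rank f hconn
  have hspan_le : finrank (ZMod 2) (span (ZMod 2)
        (Set.range (fun C => (fun j => (f C j : ZMod 2) : Quotient ρ → ZMod 2))))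
      ≤ finrank (ZMod 2) (LinearMap.range β) := by
    apply Submodule.finrank_mono
    rw [Submodule.span_le]
    rintro x ⟨C, rfl⟩
    exact hv_in C
  have hE : (∑ C : Quotient P, ((∑ j, f C j) - 2)) + 2 * Fintype.card (Quotient P)
      = 2 * k := by
    have h1 : ∑ C : Quotient P, (((∑ j, f C j) - 2) + 2) = ∑ C : Quotient P, ∑ j, f C j :=
      Finset.sum_congr rfl (fun C _ => Nat.sub_add_cancel (hw2 C))
    rw [Finset.sum_add_distrib, Finset.sum_const, Finset.card_univ, smul_eq_mul,
      htot] at h1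
    omega
  -- translate numParts
  have ha : numParts σ₀ = Fintype.card (Quotient σ₀) := Nat.card_eq_fintype_card
  have hb : numParts σ₁ = Fintype.card (Quotient σ₁) := Nat.card_eq_fintype_card
  have hrq : r = Fintype.card (Quotient ρ) := by rw [hr]; exact Nat.card_eq_fintype_card
  rw [ha, hb]
  rw [hrq] at hr1 ⊢
  omega
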